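/- arXiv:1804.01351 — 7 statements merged into one kernel-verified Lean document; each statement's English description precedes it below -/
import Mathlib

section
/- Under the equal load redistribution cascade model, the final set of failed lines depends only on the set A of initially attacked lines and not on the order in which the lines in A are attacked. Formally, if starting from attack set A the cascade process (repeatedly failing every alive line whose free space is at most the total failed load divided by the number of alive lines) is run to steady state, the resulting failed set equals the failed set obtained by attacking the lines of A one at a time in any order, letting cascades settle between attacks. -/
open Finset
open scoped Classical

/-- One step of the equal load redistribution cascade: every alive line whose
free space is at most the total failed load divided by the number of alive lines fails. -/
noncomputable def step {N : ℕ} (L S : Fin N → ℝ) (F : Finset (Fin N)) : Finset (Fin N) :=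
  F ∪ Finset.univ.filter (fun i => S i ≤ (∑ j ∈ F, L j) / ((N : ℝ) - F.card))

/-- The steady state (final failed set) of the cascade initiated by attack set `A`. -/
noncomputable def cascade {N : ℕ} (L S : Fin N → ℝ) (A : Finset (Fin N)) : Finset (Fin N) :=
  (step L S)^[N] A

lemma subset_step {N : ℕ} (L S : Fin N → ℝ) (F : Finset (Fin N)) : F ⊆ step L S F :=
  Finset.subset_union_left

lemma step_mono {N : ℕ} {L : Fin N → ℝ} (S : Fin N → ℝ) (hL : ∀ i, 0 ≤ L i) :
    Monotone (step L S) := by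
  intro F G hFG i hi
  rcases Finset.mem_union.1 hi with h | h
  · exact subset_step L S G (hFG h)
  · by_cases hG : G = Finset.univ
    · exact Finset.mem_union_left _ (hG ▸ Finset.mem_univ i)
    · have hGcard : (G.card : ℝ) < N := by
        have h1 : G.card < N := by
          simpa using Finset.card_lt_card (Finset.ssubset_univ_iff.2 hG)
        exact_mod_cast h1
      have hFcard : (F.card : ℝ) ≤ G.card := by
        exact_mod_cast Finset.card_le_card hFG
      have hsum : (∑ j ∈ F, L j) ≤ ∑ j ∈ G, L j :=
        Finset.sum_le_sum_of_subset_of_nonneg hFG (fun j _ _ => hL j)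
      have hsumG : 0 ≤ ∑ j ∈ G, L j := Finset.sum_nonneg (fun j _ => hL j)
      have hdiv : (∑ j ∈ F, L j) / ((N : ℝ) - F.card)
          ≤ (∑ j ∈ G, L j) / ((N : ℝ) - G.card) :=
        div_le_div₀ hsumG hsum (by linarith) (by linarith)
      have hmem := Finset.mem_filter.1 h
      exact Finset.mem_union_right _ (Finset.mem_filter.2
        ⟨Finset.mem_univ i, le_trans hmem.2 hdiv⟩)

lemma step_iterate_fix_or {N : ℕ} (L S : Fin N → ℝ) (A : Finset (Fin N)) :
    ∀ k, step L S ((step L S)^[k] A) = (step L S)^[k] A ∨ k ≤ ((step L S)^[k] A).card := by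
  intro k
  induction k with
  | zero => exact Or.inr (Nat.zero_le _)
  | succ k ih =>
    rcases ih with h | h
    · left
      rw [Function.iterate_succ_apply', h]
      exact h
    · by_cases hfix : step L S ((step L S)^[k] A) = (step L S)^[k] A
      · left
        rw [Function.iterate_succ_apply', hfix]
        exact hfix
      · right
        rw [Function.iterate_succ_apply']
        have hss : (step L S)^[k] A ⊂ step L S ((step L S)^[k] A) :=
          lt_of_le_of_ne (subset_step L S _) (Ne.symm hfix)
        exact Nat.succ_le_of_lt (lt_of_le_of_lt h (Finset.card_lt_card hss))

lemma cascade_fixed {N : ℕ} (L S : Fin N → ℝ) (A : Finset (Fin N)) :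
    step L S (cascade L S A) = cascade L S A := by
  rcases step_iterate_fix_or L S A N with h | h
  · exact h
  · have hcard : ((step L S)^[N] A).card = Fintype.card (Fin N) := by
      simp only [Fintype.card_fin]
      have hle : ((step L S)^[N] A).card ≤ N := by
        simpa using Finset.card_le_univ ((step L S)^[N] A)
      exact le_antisymm hle h
    have huniv : (step L S)^[N] A = Finset.univ := Finset.eq_univ_of_card _ hcard
    show step L S ((step L S)^[N] A) = (step L S)^[N] A
    rw [huniv]
    exact Finset.Subset.antisymm (Finset.subset_univ _) (subset_step L S _)

lemma subset_cascade {N : ℕ} (L S : Fin N → ℝ) (A : Finset (Fin N)) :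
    A ⊆ cascade L S A := by
  have : ∀ n, A ⊆ (step L S)^[n] A := by
    intro n
    induction n with
    | zero => exact Finset.Subset.refl A
    | succ n ih =>
      rw [Function.iterate_succ_apply']
      exact ih.trans (subset_step L S _)
  exact this N

lemma cascade_mono {N : ℕ} {L : Fin N → ℝ} (S : Fin N → ℝ) (hL : ∀ i, 0 ≤ L i) :
    Monotone (cascade L S) := (step_mono S hL).iterate N

lemma cascade_of_fixed {N : ℕ} {L S : Fin N → ℝ} {F : Finset (Fin N)}
    (h : step L S F = F) : cascade L S F = F :=
  Function.iterate_fixed h N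

lemma cascade_min {N : ℕ} {L : Fin N → ℝ} (S : Fin N → ℝ) (hL : ∀ i, 0 ≤ L i)
    {A F : Finset (Fin N)} (hAF : A ⊆ F) (hF : step L S F = F) :
    cascade L S A ⊆ F := by
  have := cascade_mono S hL hAF
  rwa [cascade_of_fixed hF] at this

lemma cascade_union_cascade {N : ℕ} {L : Fin N → ℝ} (S : Fin N → ℝ) (hL : ∀ i, 0 ≤ L i)
    (A B : Finset (Fin N)) :
    cascade L S (A ∪ cascade L S B) = cascade L S (A ∪ B) := by
  apply Finset.Subset.antisymm
  · apply cascade_min S hL _ (cascade_fixed L S (A ∪ B))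
    apply Finset.union_subset
    · exact Finset.subset_union_left.trans (subset_cascade L S (A ∪ B))
    · exact cascade_mono S hL Finset.subset_union_right
  · exact cascade_mono S hL (Finset.union_subset_union_right (subset_cascade L S B))

lemma foldl_cascade {N : ℕ} {L : Fin N → ℝ} (S : Fin N → ℝ) (hL : ∀ i, 0 ≤ L i)
    (l : List (Fin N)) :
    ∀ F : Finset (Fin N), step L S F = F →
      l.foldl (fun F a => cascade L S (insert a F)) F = cascade L S (F ∪ l.toFinset) := by
  induction l with
  | nil =>
    intro F hF
    simp [cascade_of_fixed hF]
  | cons a l ih =>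
    intro F hF
    have h1 : (a :: l).foldl (fun F a => cascade L S (insert a F)) F
        = l.foldl (fun F a => cascade L S (insert a F)) (cascade L S (insert a F)) := rfl
    rw [h1, ih _ (cascade_fixed L S (insert a F))]
    have h2 : cascade L S (insert a F) ∪ l.toFinset
        = l.toFinset ∪ cascade L S (insert a F) := Finset.union_comm _ _
    rw [h2, cascade_union_cascade S hL, Finset.union_comm]
    congr 1
    rw [List.toFinset_cons, Finset.insert_union, Finset.union_insert]

/-- The final failed set depends only on the attack set, not on the order of attack:
attacking the lines of `l` one at a time (letting cascades settle in between)
yields the same failed set as attacking `l.toFinset` at once. -/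
theorem order_of_attack_irrelevant {N : ℕ} (L C : Fin N → ℝ)
    (hL : ∀ i, 0 < L i) (hC : ∀ i, L i < C i)
    (l : List (Fin N)) (hl : l.Nodup) :
    l.foldl (fun F a => cascade L (fun i => C i - L i) (insert a F)) ∅
      = cascade L (fun i => C i - L i) l.toFinset := by
  have hL' : ∀ i, 0 ≤ L i := fun i => (hL i).le
  have hstep : step L (fun i => C i - L i) ∅ = ∅ := by
    unfold step
    rw [Finset.empty_union]
    apply Finset.filter_false_of_mem
    intro i _
    simp only [Finset.sum_empty, zero_div]
    push_neg
    linarith [hC i]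
  rw [foldl_cascade _ hL' l ∅ hstep, Finset.empty_union]
end

section
/- In the equal load redistribution cascade, non-attacked lines fail in order of increasing free space: if a non-attacked line i fails at some stage of the cascade initiated by attack set A, then every non-attacked line j with S_j <= S_i also fails by the end of the cascade. Consequently, the final alive set is of the form {i ∉ A : S_i > x} for some threshold x >= 0. -/
open Finset
open scoped Classical

/-- Non-attacked lines fail in order of increasing free space, and the final alive
set is an upper level set of the free space among non-attacked lines. -/
theorem fail_in_order_of_free_space {N : ℕ} (L S : Fin N → ℝ)
    (hL : ∀ i, 0 < L i) (hS : ∀ i, 0 < S i) (A : Finset (Fin N)) :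
    (∀ i ∉ A, i ∈ cascade L S A → ∀ j ∉ A, S j ≤ S i → j ∈ cascade L S A) ∧
    ∃ x : ℝ, 0 ≤ x ∧
      Finset.univ \ cascade L S A = Finset.univ.filter (fun i => i ∉ A ∧ x < S i) := by
  have hmono : ∀ m n : ℕ, m ≤ n → (step L S)^[m] A ⊆ (step L S)^[n] A := by
    intro m n hmn
    exact monotone_nat_of_le_succ (f := fun n => (step L S)^[n] A)
      (fun k => by
        show (step L S)^[k] A ⊆ (step L S)^[k+1] A
        rw [Function.iterate_succ_apply']
        exact Finset.subset_union_left) hmn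
  have hA : A ⊆ cascade L S A := hmono 0 N (Nat.zero_le N)
  have entry : ∀ n : ℕ, ∀ i, i ∈ (step L S)^[n] A → i ∉ A →
      ∃ k, k < n ∧
        S i ≤ (∑ j ∈ (step L S)^[k] A, L j) / ((N : ℝ) - ((step L S)^[k] A).card) := by
    intro n
    induction n with
    | zero => intro i hi hiA; exact absurd hi hiA
    | succ n ih =>
        intro i hi hiA
        rw [Function.iterate_succ_apply'] at hi
        rcases Finset.mem_union.mp hi with h | h
        · obtain ⟨k, hk, hle⟩ := ih i h hiA
          exact ⟨k, hk.trans (Nat.lt_succ_self n), hle⟩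
        · exact ⟨n, Nat.lt_succ_self n, (Finset.mem_filter.mp h).2⟩
  have part1 : ∀ i ∉ A, i ∈ cascade L S A → ∀ j ∉ A, S j ≤ S i → j ∈ cascade L S A := by
    intro i hiA hi j hjA hji
    obtain ⟨k, hk, hle⟩ := entry N i hi hiA
    have hj : j ∈ (step L S)^[k + 1] A := by
      rw [Function.iterate_succ_apply']
      exact Finset.mem_union_right _
        (Finset.mem_filter.mpr ⟨Finset.mem_univ j, hji.trans hle⟩)
    exact hmono (k + 1) N hk hj
  refine ⟨part1, ?_⟩
  set C := cascade L S A with hC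
  by_cases h : (C \ A).Nonempty
  · refine ⟨(C \ A).sup' h S, ?_, ?_⟩
    · obtain ⟨j, hj⟩ := h
      exact le_trans (hS j).le (Finset.le_sup' S hj)
    · ext i
      simp only [Finset.mem_sdiff, Finset.mem_univ, true_and, Finset.mem_filter]
      constructor
      · intro hiC
        have hiA : i ∉ A := fun hA' => hiC (hA hA')
        refine ⟨hiA, ?_⟩
        rw [Finset.sup'_lt_iff]
        intro j hj
        rcases Finset.mem_sdiff.mp hj with ⟨hjC, hjA⟩
        by_contra hlt
        push_neg at hlt
        exact hiC (part1 j hjA hjC i hiA hlt)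
      · rintro ⟨hiA, hx⟩ hiC
        exact absurd hx (not_lt.mpr
          (Finset.le_sup' S (Finset.mem_sdiff.mpr ⟨hiC, hiA⟩)))
  · refine ⟨0, le_refl 0, ?_⟩
    have hCA : C ⊆ A := by
      intro i hi
      by_contra hiA
      exact h ⟨i, Finset.mem_sdiff.mpr ⟨hi, hiA⟩⟩
    ext i
    simp only [Finset.mem_sdiff, Finset.mem_univ, true_and, Finset.mem_filter]
    constructor
    · intro hiC
      exact ⟨fun hA' => hiC (hA hA'), hS i⟩
    · rintro ⟨hiA, -⟩ hiC
      exact hiA (hCA hiC)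
end

section
/- Suppose all lines have the same free space, i.e., S_i = S > 0 for every i. Then attacking a set A with |A| = k and k < N produces no intermediate cascade: either the entire system fails, which happens if and only if sum_{i in A} L_i >= (N - k) * S, or no line outside A fails, i.e., n_∞(A) = N - k. -/
open Finset
open scoped Classical

/-- With a common free space `S`, attacking a set `A` of `k < N` lines produces no
intermediate cascade: the whole system fails iff the attacked load is at least
`(N-k)*S`, and otherwise no line outside `A` fails. -/
theorem same_free_space_no_intermediate_cascade {N : ℕ} (L : Fin N → ℝ) (S : ℝ)
    (hL : ∀ i, 0 < L i) (hS : 0 < S)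
    (A : Finset (Fin N)) (k : ℕ) (hA : A.card = k) (hk : k < N) :
    (cascade L (fun _ => S) A = Finset.univ ↔ ((N : ℝ) - k) * S ≤ ∑ i ∈ A, L i) ∧
    (¬ (((N : ℝ) - k) * S ≤ ∑ i ∈ A, L i) → cascade L (fun _ => S) A = A) := by
  have hNk : (0:ℝ) < (N:ℝ) - k := by
    have h1 : (k:ℝ) < N := by exact_mod_cast hk
    linarith
  have hN0 : N ≠ 0 := by omega
  obtain ⟨n, hn⟩ := Nat.exists_eq_succ_of_ne_zero hN0
  have huniv : step L (fun _ => S) Finset.univ = Finset.univ := by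
    unfold step
    simp
  by_cases h : ((N:ℝ) - k) * S ≤ ∑ i ∈ A, L i
  · have hstepA : step L (fun _ => S) A = Finset.univ := by
      unfold step
      have hcond : ∀ i ∈ Finset.univ (α := Fin N),
          (fun _ : Fin N => S) i ≤ (∑ j ∈ A, L j) / ((N : ℝ) - A.card) := by
        intro i _
        rw [hA, le_div_iff₀ hNk]
        nlinarith
      rw [Finset.filter_true_of_mem hcond]
      exact Finset.union_eq_right.mpr (Finset.subset_univ A)
    have hcas : cascade L (fun _ => S) A = Finset.univ := by
      unfold cascade
      have hiter : (step L fun _ => S)^[N] A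
          = (step L fun _ => S)^[n] (step L (fun _ => S) A) := by
        rw [← Function.iterate_succ_apply]
        congr 1
      rw [hiter, hstepA, Function.iterate_fixed huniv]
    exact ⟨⟨fun _ => h, fun _ => hcas⟩, fun hc => absurd h hc⟩
  · have hstepA : step L (fun _ => S) A = A := by
      unfold step
      have hcond : ∀ i ∈ Finset.univ (α := Fin N),
          ¬ ((fun _ : Fin N => S) i ≤ (∑ j ∈ A, L j) / ((N : ℝ) - A.card)) := by
        intro i _
        rw [hA, not_le, div_lt_iff₀ hNk]
        nlinarith [not_le.mp h]
      rw [Finset.filter_false_of_mem hcond, Finset.union_empty]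
    have hcas : cascade L (fun _ => S) A = A := by
      unfold cascade
      exact Function.iterate_fixed hstepA N
    refine ⟨⟨fun hu => ?_, fun hh => absurd hh h⟩, fun _ => hcas⟩
    exfalso
    rw [hcas] at hu
    have : A.card = N := by rw [hu]; simp
    omega
end

section
/- Greedy max-load attack can be Θ(N)-suboptimal: for every N >= 2 there exists a configuration of N lines with loads L_i and capacities C_i > L_i such that (a) there exists a single line whose attack triggers a cascade failing all N lines, but (b) the greedy strategy that repeatedly attacks the alive line with the largest current load (waiting for steady state after each attack) must attack all N lines before the whole system fails, i.e., no cascading failures ever occur under the greedy max-load attack. -/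
open Finset
open scoped Classical

/-! ### Auxiliary construction -/

/-- Loads: line 0 has load 1, line `i ≥ 1` has load `N + 1 - i`. -/
noncomputable def Lload (N : ℕ) : Fin N → ℝ :=
  fun i => if i.val = 0 then 1 else (N : ℝ) + 1 - (i.val : ℝ)

/-- Prefix sums of the loads: total load of lines with index `< m`. -/
noncomputable def Qsum (N m : ℕ) : ℝ :=
  ∑ i ∈ Finset.univ.filter (fun i : Fin N => i.val < m), Lload N i

/-- Free spaces. -/
noncomputable def Sfree (N : ℕ) : Fin N → ℝ :=
  fun j => if j.val = 0 then Qsum N N + 1 else Qsum N j.val / ((N : ℝ) - (j.val : ℝ))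

lemma Lload_pos {N : ℕ} (i : Fin N) : 0 < Lload N i := by
  unfold Lload
  split
  · norm_num
  · have : (i.val : ℝ) < (N : ℝ) := by exact_mod_cast i.isLt
    linarith

lemma Lload_ge_two {N : ℕ} (i : Fin N) (h : i.val ≠ 0) : 2 ≤ Lload N i := by
  unfold Lload
  rw [if_neg h]
  have h1 : (i.val : ℝ) + 1 ≤ (N : ℝ) := by exact_mod_cast i.isLt
  linarith

lemma Lload_zero {N : ℕ} (i : Fin N) (h : i.val = 0) : Lload N i = 1 := by
  unfold Lload; rw [if_pos h]

lemma Qsum_mono {N : ℕ} {m m' : ℕ} (h : m ≤ m') : Qsum N m ≤ Qsum N m' := by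
  apply Finset.sum_le_sum_of_subset_of_nonneg
  · intro i hi
    simp only [Finset.mem_filter, Finset.mem_univ, true_and] at hi ⊢
    omega
  · intro i _ _
    exact (Lload_pos i).le

lemma Qsum_nonneg {N m : ℕ} : 0 ≤ Qsum N m :=
  Finset.sum_nonneg (fun i _ => (Lload_pos i).le)

lemma Qsum_ge_one {N : ℕ} (hN : 0 < N) {m : ℕ} (hm : 1 ≤ m) : 1 ≤ Qsum N m := by
  have h0 : (⟨0, hN⟩ : Fin N) ∈ Finset.univ.filter (fun i : Fin N => i.val < m) := by
    simp only [Finset.mem_filter, Finset.mem_univ, true_and]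
    omega
  calc (1 : ℝ) = Lload N ⟨0, hN⟩ := (Lload_zero _ rfl).symm
    _ ≤ Qsum N m := Finset.single_le_sum (fun i _ => (Lload_pos i).le) h0

lemma card_filter_lt_le {N m : ℕ} :
    (Finset.univ.filter (fun i : Fin N => i.val < m)).card ≤ m := by
  have := Finset.card_le_card_of_injOn (f := Fin.val)
    (s := Finset.univ.filter (fun i : Fin N => i.val < m)) (t := Finset.range m)
    (by intro a ha
        simp only [Finset.mem_coe, Finset.mem_filter, Finset.mem_univ, true_and] at ha
        simpa using ha)
    (by intro a _ b _ hab; exact Fin.ext hab)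
  simpa using this

lemma card_filter_le_eq {N m : ℕ} (h : m < N) :
    (Finset.univ.filter (fun i : Fin N => i.val ≤ m)).card = m + 1 := by
  apply Finset.card_eq_of_bijective (f := fun k hk => (⟨k, by omega⟩ : Fin N))
  · intro a ha
    simp only [Finset.mem_filter, Finset.mem_univ, true_and] at ha
    exact ⟨a.val, by omega, Fin.ext rfl⟩
  · intro k hk
    simp only [Finset.mem_filter, Finset.mem_univ, true_and]
    omega
  · intro k k' hk hk' hkk
    simpa using congrArg Fin.val hkk

lemma sum_filter_le {N m : ℕ} :
    ∑ i ∈ Finset.univ.filter (fun i : Fin N => i.val ≤ m), Lload N i = Qsum N (m + 1) := by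
  unfold Qsum
  congr 1
  ext i
  simp [Nat.lt_succ_iff]

/-- One cascade step from the failed set `{0,…,m}` fails exactly line `m+1`. -/
lemma step_B {N m : ℕ} (hm : m + 1 < N) :
    step (Lload N) (Sfree N) (Finset.univ.filter (fun i : Fin N => i.val ≤ m))
      = Finset.univ.filter (fun i : Fin N => i.val ≤ m + 1) := by
  have hcard := card_filter_le_eq (N := N) (m := m) (by omega)
  have hQ1 : (1 : ℝ) ≤ Qsum N (m + 1) := Qsum_ge_one (by omega) (by omega)
  unfold step
  rw [sum_filter_le, hcard]
  ext i
  simp only [Finset.mem_union, Finset.mem_filter, Finset.mem_univ, true_and]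
  constructor
  · rintro (h | h)
    · omega
    · by_contra hgt
      have hi2 : m + 2 ≤ i.val := by omega
      have hiN : i.val < N := i.isLt
      have hS : Sfree N i = Qsum N i.val / ((N : ℝ) - (i.val : ℝ)) := by
        unfold Sfree; rw [if_neg (by omega)]
      have hd1 : (0 : ℝ) < (N : ℝ) - (i.val : ℝ) := by
        have : (i.val : ℝ) < (N : ℝ) := by exact_mod_cast hiN
        linarith
      have hd2 : (N : ℝ) - (i.val : ℝ) < (N : ℝ) - ((m + 1 : ℕ) : ℝ) := by
        push_cast
        have : ((m : ℝ) + 2) ≤ (i.val : ℝ) := by exact_mod_cast hi2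
        linarith
      have hlt : Qsum N (m + 1) / ((N : ℝ) - ((m + 1 : ℕ) : ℝ))
          < Qsum N i.val / ((N : ℝ) - (i.val : ℝ)) := by
        calc Qsum N (m + 1) / ((N : ℝ) - ((m + 1 : ℕ) : ℝ))
            < Qsum N (m + 1) / ((N : ℝ) - (i.val : ℝ)) :=
              div_lt_div_of_pos_left (by linarith) hd1 hd2
          _ ≤ Qsum N i.val / ((N : ℝ) - (i.val : ℝ)) := by
              gcongr
              exact Qsum_mono (by omega)
      rw [hS] at h
      linarith
  · intro h
    rcases Nat.lt_or_ge i.val (m + 1) with h1 | h1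
    · left; omega
    · right
      have hie : i.val = m + 1 := by omega
      have hS : Sfree N i = Qsum N i.val / ((N : ℝ) - (i.val : ℝ)) := by
        unfold Sfree; rw [if_neg (by omega)]
      rw [hS, hie]

/-- If the domination condition holds and not everything is attacked, one step changes nothing. -/
lemma step_fix {N : ℕ} (hN : 2 ≤ N) (A : Finset (Fin N)) (hA : A.card < N)
    (hdom : ∀ i ∈ A, ∀ j ∉ A, Lload N j ≤ Lload N i) :
    step (Lload N) (Sfree N) A = A := by
  unfold step
  rw [Finset.union_eq_left]
  intro j hj
  simp only [Finset.mem_filter, Finset.mem_univ, true_and] at hj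
  by_contra hjA
  have hkN : (0 : ℝ) < (N : ℝ) - (A.card : ℝ) := by
    have : (A.card : ℝ) < (N : ℝ) := by exact_mod_cast hA
    linarith
  have hk1 : (1 : ℝ) ≤ (N : ℝ) - (A.card : ℝ) := by
    have : (A.card : ℝ) + 1 ≤ (N : ℝ) := by exact_mod_cast hA
    linarith
  have hsum_nonneg : (0 : ℝ) ≤ ∑ i ∈ A, Lload N i :=
    Finset.sum_nonneg (fun i _ => (Lload_pos i).le)
  by_cases hj0 : j.val = 0
  · -- j is line 0: its free space exceeds the total load of everything
    have hS : Sfree N j = Qsum N N + 1 := by unfold Sfree; rw [if_pos hj0]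
    have hle : ∑ i ∈ A, Lload N i ≤ Qsum N N := by
      apply Finset.sum_le_sum_of_subset_of_nonneg
      · intro i _
        simp only [Finset.mem_filter, Finset.mem_univ, true_and]
        exact i.isLt
      · intro i _ _; exact (Lload_pos i).le
    have hthr : (∑ i ∈ A, Lload N i) / ((N : ℝ) - (A.card : ℝ)) ≤ ∑ i ∈ A, Lload N i :=
      div_le_self hsum_nonneg hk1
    rw [hS] at hj
    linarith
  · -- j ≥ 1: every attacked line must have bigger load, hence smaller positive index
    have hLj : 2 ≤ Lload N j := Lload_ge_two j hj0
    have hjN : j.val < N := j.isLt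
    have z0 : Fin N := ⟨0, by omega⟩
    have hsub : A ⊆ (Finset.univ.filter (fun i : Fin N => i.val < j.val)).erase ⟨0, by omega⟩ := by
      intro i hi
      have hLi := hdom i hi j hjA
      have hi0 : i.val ≠ 0 := by
        intro h0
        rw [Lload_zero i h0] at hLi
        linarith
      have hLi2 : (N : ℝ) + 1 - (j.val : ℝ) ≤ (N : ℝ) + 1 - (i.val : ℝ) := by
        have e1 : Lload N j = (N : ℝ) + 1 - (j.val : ℝ) := by unfold Lload; rw [if_neg hj0]
        have e2 : Lload N i = (N : ℝ) + 1 - (i.val : ℝ) := by unfold Lload; rw [if_neg hi0]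
        rw [e1, e2] at hLi
        exact hLi
      have hval : i.val ≤ j.val := by
        have : (i.val : ℝ) ≤ (j.val : ℝ) := by linarith
        exact_mod_cast this
      have hne : i ≠ j := fun h => hjA (h ▸ hi)
      have hlt : i.val < j.val := lt_of_le_of_ne hval (fun h => hne (Fin.ext h))
      rw [Finset.mem_erase]
      refine ⟨fun h => hi0 (by simpa using congrArg Fin.val h), ?_⟩
      simp only [Finset.mem_filter, Finset.mem_univ, true_and]
      exact hlt
    have hj1 : 1 ≤ j.val := by omega
    have h0mem : (⟨0, by omega⟩ : Fin N) ∈ Finset.univ.filter (fun i : Fin N => i.val < j.val) := by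
      simp only [Finset.mem_filter, Finset.mem_univ, true_and]
      omega
    -- sum bound: ∑_A ≤ Qsum j - 1
    have hsum : ∑ i ∈ A, Lload N i ≤ Qsum N j.val - 1 := by
      have h1 : ∑ i ∈ A, Lload N i
          ≤ ∑ i ∈ (Finset.univ.filter (fun i : Fin N => i.val < j.val)).erase ⟨0, by omega⟩,
              Lload N i :=
        Finset.sum_le_sum_of_subset_of_nonneg hsub (fun i _ _ => (Lload_pos i).le)
      have h2 : (∑ i ∈ (Finset.univ.filter (fun i : Fin N => i.val < j.val)).erase ⟨0, by omega⟩,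
              Lload N i) + Lload N ⟨0, by omega⟩
          = Qsum N j.val := Finset.sum_erase_add _ _ h0mem
      have h3 : Lload N (⟨0, by omega⟩ : Fin N) = 1 := Lload_zero _ rfl
      linarith
    -- card bound
    have hcard : A.card ≤ j.val := by
      calc A.card ≤ ((Finset.univ.filter (fun i : Fin N => i.val < j.val)).erase
            (⟨0, by omega⟩ : Fin N)).card := Finset.card_le_card hsub
        _ ≤ (Finset.univ.filter (fun i : Fin N => i.val < j.val)).card :=
            Finset.card_le_card (Finset.erase_subset _ _)
        _ ≤ j.val := card_filter_lt_le
    have hdj : (0 : ℝ) < (N : ℝ) - (j.val : ℝ) := by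
      have : (j.val : ℝ) < (N : ℝ) := by exact_mod_cast hjN
      linarith
    have hdjk : (N : ℝ) - (A.card : ℝ) ≥ (N : ℝ) - (j.val : ℝ) := by
      have : (A.card : ℝ) ≤ (j.val : ℝ) := by exact_mod_cast hcard
      linarith
    have hQj : (1 : ℝ) ≤ Qsum N j.val := Qsum_ge_one (by omega) hj1
    have hS : Sfree N j = Qsum N j.val / ((N : ℝ) - (j.val : ℝ)) := by
      unfold Sfree; rw [if_neg hj0]
    have hchain : (∑ i ∈ A, Lload N i) / ((N : ℝ) - (A.card : ℝ))
        < Qsum N j.val / ((N : ℝ) - (j.val : ℝ)) := by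
      calc (∑ i ∈ A, Lload N i) / ((N : ℝ) - (A.card : ℝ))
          ≤ (Qsum N j.val - 1) / ((N : ℝ) - (A.card : ℝ)) := by gcongr
        _ < Qsum N j.val / ((N : ℝ) - (A.card : ℝ)) := by
            apply div_lt_div_of_pos_right (by linarith) (by linarith)
        _ ≤ Qsum N j.val / ((N : ℝ) - (j.val : ℝ)) := by
            apply div_le_div_of_nonneg_left (by linarith) hdj hdjk
    rw [hS] at hj
    linarith

/-- The greedy max-load attack can be `Θ(N)`-suboptimal: for every `N ≥ 2` there is a
configuration where a single well-chosen attack collapses the whole system, yet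
attacking lines in decreasing order of (current, equivalently initial) load never
triggers any cascade, so the greedy max-load strategy must attack all `N` lines. -/
theorem greedy_max_load_suboptimal (N : ℕ) (hN : 2 ≤ N) :
    ∃ L C : Fin N → ℝ,
      (∀ i, 0 < L i) ∧ (∀ i, L i < C i) ∧
      (∃ a : Fin N, cascade L (fun i => C i - L i) {a} = Finset.univ) ∧
      (∀ A : Finset (Fin N), A.card < N →
        (∀ i ∈ A, ∀ j ∉ A, L j ≤ L i) → cascade L (fun i => C i - L i) A = A) := by
  refine ⟨Lload N, fun i => Lload N i + Sfree N i, fun i => Lload_pos i, ?_, ?_, ?_⟩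
  · -- L < C, i.e. S > 0
    intro i
    have : 0 < Sfree N i := by
      unfold Sfree
      split
      · have := Qsum_nonneg (N := N) (m := N)
        linarith
      · apply div_pos
        · have : (1 : ℝ) ≤ Qsum N i.val :=
            Qsum_ge_one (by omega) (by omega)
          linarith
        · have : (i.val : ℝ) < (N : ℝ) := by exact_mod_cast i.isLt
          linarith
    show Lload N i < Lload N i + Sfree N i
    linarith
  · -- the single attack on line 0 kills everything
    have hCS : (fun i => Lload N i + Sfree N i - Lload N i) = Sfree N := by
      funext i; ring
    refine ⟨⟨0, by omega⟩, ?_⟩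
    rw [hCS]
    have key : ∀ m, m ≤ N - 1 →
        (step (Lload N) (Sfree N))^[m] ({(⟨0, by omega⟩ : Fin N)} : Finset (Fin N))
          = Finset.univ.filter (fun i : Fin N => i.val ≤ m) := by
      intro m
      induction m with
      | zero =>
        intro _
        ext i
        simp only [Function.iterate_zero, id_eq, Finset.mem_singleton,
          Finset.mem_filter, Finset.mem_univ, true_and, Nat.le_zero]
        constructor
        · intro h; rw [h]
        · intro h; exact Fin.ext h
      | succ m ih =>
        intro hm
        rw [Function.iterate_succ_apply', ih (by omega), step_B (by omega)]
    unfold cascade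
    have hsplit := Function.iterate_succ_apply' (step (Lload N) (Sfree N)) (N - 1)
      ({(⟨0, by omega⟩ : Fin N)} : Finset (Fin N))
    have hNe : (N - 1).succ = N := by omega
    rw [hNe] at hsplit
    rw [hsplit, key (N - 1) le_rfl]
    have huniv : Finset.univ.filter (fun i : Fin N => i.val ≤ N - 1) = Finset.univ := by
      ext i
      simp only [Finset.mem_filter, Finset.mem_univ, true_and, iff_true]
      have := i.isLt
      omega
    rw [huniv]
    unfold step
    exact Finset.Subset.antisymm (Finset.subset_univ _) Finset.subset_union_left
  · -- greedy never cascades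
    intro A hA hdom
    have hCS : (fun i => Lload N i + Sfree N i - Lload N i) = Sfree N := by
      funext i; ring
    rw [hCS]
    unfold cascade
    exact Function.iterate_fixed (step_fix hN A hA hdom) N
end

section
/- Reduction from k-Subset-Sum: let a_1, ..., a_N be positive integers, Q > 0, and 0 < k < N. Construct lines with loads L_i = a_i and common free space S_i = Q/(N-k) for all i. Then there exists an attack set A with |A| = k and sum_{i in A} L_i <= Q whose cascade fails all N lines if and only if there exists a subset of {a_1, ..., a_N} of size k summing exactly to Q. -/
open Finset
open scoped Classical

lemma step_univ {N : ℕ} (L S : Fin N → ℝ) : step L S Finset.univ = Finset.univ := by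
  simp [step]

/-- Reduction from `k`-Subset-Sum: with loads `a i` and common free space `Q/(N-k)`,
there is a size-`k` attack of total load at most `Q` collapsing the whole system iff
some `k` of the integers `a i` sum exactly to `Q`. -/
theorem subset_sum_reduction (N k : ℕ) (hk : 0 < k) (hkN : k < N)
    (a : Fin N → ℕ) (ha : ∀ i, 0 < a i) (Q : ℕ) (hQ : 0 < Q) :
    ((∃ A : Finset (Fin N), A.card = k ∧ (∑ i ∈ A, a i) ≤ Q ∧
        cascade (fun i => (a i : ℝ)) (fun _ => (Q : ℝ) / ((N : ℝ) - k)) A = Finset.univ) ↔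
      (∃ B : Finset (Fin N), B.card = k ∧ (∑ i ∈ B, a i) = Q)) := by
  have hNk : (0:ℝ) < (N:ℝ) - k := by
    have : (k:ℝ) < N := by exact_mod_cast hkN
    linarith
  constructor
  · rintro ⟨A, hcard, hle, hcas⟩
    refine ⟨A, hcard, ?_⟩
    by_contra hne
    have hlt : (∑ i ∈ A, a i) < Q := lt_of_le_of_ne hle hne
    have hstep : step (fun i => (a i : ℝ)) (fun _ => (Q:ℝ)/((N:ℝ)-k)) A = A := by
      unfold step
      have hfil : Finset.univ.filter
          (fun i => (fun _ : Fin N => (Q:ℝ)/((N:ℝ)-k)) i ≤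
            (∑ j ∈ A, (fun i => (a i : ℝ)) j) / ((N : ℝ) - A.card)) = ∅ := by
        apply Finset.filter_false_of_mem
        intro i _
        rw [hcard]
        push_neg
        rw [div_lt_div_iff_of_pos_right hNk]
        push_cast
        exact_mod_cast hlt
      rw [hfil, Finset.union_empty]
    have : cascade (fun i => (a i : ℝ)) (fun _ => (Q:ℝ)/((N:ℝ)-k)) A = A := by
      unfold cascade
      exact Function.iterate_fixed hstep N
    rw [hcas] at this
    have := congrArg Finset.card this
    rw [Finset.card_univ, Fintype.card_fin, hcard] at this
    omega
  · rintro ⟨B, hcard, hsum⟩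
    refine ⟨B, hcard, le_of_eq hsum, ?_⟩
    have h1 : step (fun i => (a i : ℝ)) (fun _ => (Q:ℝ)/((N:ℝ)-k)) B = Finset.univ := by
      unfold step
      have hfil : Finset.univ.filter
          (fun i => (fun _ : Fin N => (Q:ℝ)/((N:ℝ)-k)) i ≤
            (∑ j ∈ B, (fun i => (a i : ℝ)) j) / ((N : ℝ) - B.card)) = Finset.univ := by
        apply Finset.filter_true_of_mem
        intro i _
        rw [hcard]
        have : (∑ j ∈ B, ((a j : ℕ) : ℝ)) = (Q : ℝ) := by
          push_cast
          exact_mod_cast hsum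
        rw [this]
      rw [hfil]; exact Finset.union_eq_right.mpr (Finset.subset_univ B)
    unfold cascade
    obtain ⟨M, rfl⟩ : ∃ M, N = M + 1 := ⟨N - 1, by omega⟩
    rw [Function.iterate_succ_apply, h1]
    exact Function.iterate_fixed (step_univ _ _) _
end

section
/- Steady-state fixed-point characterization: for an attack set A, define the map on nonnegative reals T(x) = ( sum_{i in A} L_i + sum_{i ∉ A, S_i <= x} L_i ) / ( number of i ∉ A with S_i > x ), defined whenever the denominator is positive. Then the cascade from A terminates with alive set {i ∉ A : S_i > x*}, where x* is the smallest nonnegative value satisfying T(x*) <= x* (the least fixed point of the load-redistribution map); if no such x* exists then all lines fail. -/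
open Finset
open scoped Classical

namespace SteadyAux

variable {N : ℕ} (L S : Fin N → ℝ)

noncomputable def thr (F : Finset (Fin N)) : ℝ := (∑ j ∈ F, L j) / ((N : ℝ) - F.card)

lemma step_eq (F : Finset (Fin N)) :
    step L S F = F ∪ Finset.univ.filter (fun i => S i ≤ thr L F) := rfl

lemma subset_step (F : Finset (Fin N)) : F ⊆ step L S F := Finset.subset_union_left

lemma thr_nonneg (hL : ∀ i, 0 < L i) {F : Finset (Fin N)} (h : F.card < N) : 0 ≤ thr L F := by
  apply div_nonneg (Finset.sum_nonneg fun i _ => (hL i).le)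
  have : (F.card : ℝ) < (N : ℝ) := by exact_mod_cast h
  linarith

lemma thr_mono (hL : ∀ i, 0 < L i) {F F' : Finset (Fin N)} (hFF' : F ⊆ F')
    (h : F'.card < N) : thr L F ≤ thr L F' := by
  have h1 : (0:ℝ) < (N:ℝ) - F'.card := by
    have : (F'.card : ℝ) < (N : ℝ) := by exact_mod_cast h
    linarith
  have h2 : ((N:ℝ) - F'.card) ≤ (N:ℝ) - F.card := by
    have : (F.card : ℝ) ≤ (F'.card : ℝ) := by exact_mod_cast Finset.card_le_card hFF'
    linarith
  exact div_le_div₀ (Finset.sum_nonneg fun i _ => (hL i).le)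
    (Finset.sum_le_sum_of_subset_of_nonneg hFF' fun i _ _ => (hL i).le) h1 h2

lemma step_mono (hL : ∀ i, 0 < L i) {F F' : Finset (Fin N)} (h : F ⊆ F') :
    step L S F ⊆ step L S F' := by
  rcases lt_or_ge F'.card N with h' | h'
  · rw [step_eq, step_eq]
    apply Finset.union_subset_union h
    intro i hi
    rw [Finset.mem_filter] at hi ⊢
    exact ⟨hi.1, hi.2.trans (thr_mono L hL h h')⟩
  · have hF' : F' = univ := Finset.eq_univ_of_card _
      (le_antisymm (by simpa using Finset.card_le_univ F') (by simpa using h'))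
    have : univ ⊆ step L S F' := hF' ▸ subset_step L S F'
    exact (Finset.subset_univ _).trans this

lemma stab (A : Finset (Fin N)) (k : ℕ) :
    (step L S)^[k+1] A = (step L S)^[k] A ∨ k ≤ ((step L S)^[k] A).card := by
  induction k with
  | zero => exact Or.inr (Nat.zero_le _)
  | succ k ih =>
    by_cases h : (step L S)^[k+1] A = (step L S)^[k] A
    · left
      have h' : step L S ((step L S)^[k] A) = (step L S)^[k] A := by
        rw [← Function.iterate_succ_apply' (step L S) k A]; exact h
      rw [Function.iterate_succ_apply' (step L S) (k+1) A, h, h']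
    · right
      rcases ih with ih | ih
      · exact absurd ih h
      · have hss : (step L S)^[k] A ⊂ (step L S)^[k+1] A := by
          refine ⟨?_, fun hsub => h (Finset.Subset.antisymm hsub ?_)⟩ <;>
            · rw [Function.iterate_succ_apply']; exact subset_step L S _
        have := Finset.card_lt_card hss
        omega

lemma cascade_fixed (A : Finset (Fin N)) : step L S (cascade L S A) = cascade L S A := by
  rcases stab L S A N with h | h
  · rw [cascade, ← Function.iterate_succ_apply' (step L S) N A]
    exact h
  · have hcard : ((step L S)^[N] A).card = N :=
      le_antisymm (by simpa using Finset.card_le_univ ((step L S)^[N] A)) h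
    have huniv : (step L S)^[N] A = univ := Finset.eq_univ_of_card _ (by simpa using hcard)
    rw [cascade, huniv]
    exact (Finset.subset_univ _).antisymm (subset_step L S _)

lemma iterate_subset_of_fixed (hL : ∀ i, 0 < L i) {G A : Finset (Fin N)}
    (hG : step L S G = G) (hA : A ⊆ G) (k : ℕ) : (step L S)^[k] A ⊆ G := by
  induction k with
  | zero => exact hA
  | succ k ih =>
    rw [Function.iterate_succ_apply']
    exact (step_mono L S hL ih).trans hG.le

lemma subset_iterate (A : Finset (Fin N)) (k : ℕ) : A ⊆ (step L S)^[k] A := by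
  induction k with
  | zero => exact Finset.Subset.refl A
  | succ k ih =>
    rw [Function.iterate_succ_apply']
    exact ih.trans (subset_step L S _)

lemma cascade_subset_bound (hL : ∀ i, 0 < L i) (A : Finset (Fin N))
    (h : (cascade L S A).card < N) (k : ℕ) :
    (step L S)^[k] A ⊆ A ∪ univ.filter (fun i => S i ≤ thr L (cascade L S A)) := by
  induction k with
  | zero => exact Finset.subset_union_left
  | succ k ih =>
    rw [Function.iterate_succ_apply', step_eq]
    apply Finset.union_subset ih
    intro i hi
    apply Finset.mem_union_right
    rw [Finset.mem_filter] at hi ⊢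
    refine ⟨hi.1, hi.2.trans (thr_mono L hL ?_ h)⟩
    exact iterate_subset_of_fixed L S hL (cascade_fixed L S A) (subset_iterate L S A N) k

lemma subset_cascade (A : Finset (Fin N)) : A ⊆ cascade L S A := subset_iterate L S A N

lemma Fx_eq_union (A : Finset (Fin N)) (x : ℝ) :
    univ.filter (fun i => i ∈ A ∨ S i ≤ x) = A ∪ univ.filter (fun i => i ∉ A ∧ S i ≤ x) := by
  ext i
  simp only [Finset.mem_filter, Finset.mem_union, Finset.mem_univ, true_and]
  tauto

lemma compl_Fx (A : Finset (Fin N)) (x : ℝ) :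
    univ \ univ.filter (fun i => i ∈ A ∨ S i ≤ x) = univ.filter (fun i => i ∉ A ∧ x < S i) := by
  ext i
  simp only [Finset.mem_sdiff, Finset.mem_filter, Finset.mem_univ, true_and, not_or, not_le]

lemma card_compl (F : Finset (Fin N)) : ((univ \ F).card : ℝ) = (N : ℝ) - F.card := by
  rw [Finset.card_sdiff_of_subset (Finset.subset_univ F), Finset.card_univ, Fintype.card_fin,
    Nat.cast_sub (by simpa using Finset.card_le_univ F)]

lemma sum_Fx (A : Finset (Fin N)) (x : ℝ) :
    ∑ j ∈ univ.filter (fun i => i ∈ A ∨ S i ≤ x), L j =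
      (∑ i ∈ A, L i) + ∑ i ∈ univ.filter (fun i => i ∉ A ∧ S i ≤ x), L i := by
  rw [Fx_eq_union, Finset.sum_union]
  exact Finset.disjoint_left.2 fun i hi h2 => (Finset.mem_filter.1 h2).2.1 hi

/-- `T x ≤ x` implies the set `Fx = A ∪ {S ≤ x}` is a fixed point of `step`. -/
lemma Fx_fixed (A : Finset (Fin N)) (x : ℝ)
    (hthr : thr L (univ.filter (fun i => i ∈ A ∨ S i ≤ x)) ≤ x) :
    step L S (univ.filter (fun i => i ∈ A ∨ S i ≤ x)) =
      univ.filter (fun i => i ∈ A ∨ S i ≤ x) := by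
  rw [step_eq]
  refine Finset.Subset.antisymm (Finset.union_subset (Finset.Subset.refl _) ?_)
    Finset.subset_union_left
  intro i hi
  rw [Finset.mem_filter] at hi ⊢
  exact ⟨hi.1, Or.inr (hi.2.trans hthr)⟩

/-- thr of Fx equals the T-expression. -/
lemma thr_Fx (A : Finset (Fin N)) (x : ℝ) :
    thr L (univ.filter (fun i => i ∈ A ∨ S i ≤ x)) =
      ((∑ i ∈ A, L i) + ∑ i ∈ univ.filter (fun i => i ∉ A ∧ S i ≤ x), L i) /
        ((univ.filter (fun i => i ∉ A ∧ x < S i)).card : ℝ) := by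
  rw [thr, sum_Fx L S, ← compl_Fx S A x, card_compl]

/-- Main structural lemma: if the cascade does not kill everything, it equals
`Fy` for `y := thr (cascade)`, which satisfies `T y ≤ y`. -/
lemma cascade_char (hL : ∀ i, 0 < L i) (A : Finset (Fin N))
    (hne : cascade L S A ≠ univ) :
    ∃ y : ℝ, 0 ≤ y ∧
      0 < (univ.filter (fun i => i ∉ A ∧ y < S i)).card ∧
      ((∑ i ∈ A, L i) + ∑ i ∈ univ.filter (fun i => i ∉ A ∧ S i ≤ y), L i) /
        ((univ.filter (fun i => i ∉ A ∧ y < S i)).card : ℝ) ≤ y ∧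
      cascade L S A = univ.filter (fun i => i ∈ A ∨ S i ≤ y) := by
  set C := cascade L S A with hC
  have hcard : C.card < N := by
    have hss : C ⊂ univ := (Finset.subset_univ C).ssubset_of_ne hne
    have := Finset.card_lt_card hss
    simpa using this
  set y := thr L C with hy
  have hy0 : 0 ≤ y := thr_nonneg L hL hcard
  have hCeq : C = univ.filter (fun i => i ∈ A ∨ S i ≤ y) := by
    apply Finset.Subset.antisymm
    · intro i hi
      have := cascade_subset_bound L S hL A hcard N hi
      rw [Finset.mem_filter]
      rcases Finset.mem_union.1 this with h | h
      · exact ⟨Finset.mem_univ i, Or.inl h⟩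
      · exact ⟨Finset.mem_univ i, Or.inr (Finset.mem_filter.1 h).2⟩
    · intro i hi
      rcases (Finset.mem_filter.1 hi).2 with h | h
      · exact subset_cascade L S A h
      · have : i ∈ step L S C := by
          rw [step_eq]
          exact Finset.mem_union_right _ (Finset.mem_filter.2 ⟨Finset.mem_univ i, h⟩)
        rwa [cascade_fixed L S A] at this
  have hcompl : univ \ C = univ.filter (fun i => i ∉ A ∧ y < S i) := by
    rw [hCeq]; exact compl_Fx S A y
  refine ⟨y, hy0, ?_, ?_, hCeq⟩
  · rw [← hcompl]
    apply Finset.card_pos.2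
    rw [Finset.sdiff_nonempty]
    exact fun hsub => hne ((Finset.subset_univ C).antisymm hsub)
  · rw [← thr_Fx L S, ← hCeq]

end SteadyAux

open SteadyAux

/-- Fixed-point characterization of the steady state: with
`T(x) = (attacked load + load of non-attacked lines with S ≤ x) / #{non-attacked with S > x}`,
if `x*` is the least nonnegative point with `T(x*) ≤ x*` then the alive set is
`{i ∉ A : S i > x*}`; if no such point exists, all lines fail. -/
theorem steady_state_fixed_point {N : ℕ} (L S : Fin N → ℝ)
    (hL : ∀ i, 0 < L i) (hS : ∀ i, 0 < S i) (A : Finset (Fin N)) :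
    (∀ x : ℝ, 0 ≤ x →
      0 < (Finset.univ.filter (fun i => i ∉ A ∧ x < S i)).card →
      ((∑ i ∈ A, L i) + ∑ i ∈ Finset.univ.filter (fun i => i ∉ A ∧ S i ≤ x), L i) /
          ((Finset.univ.filter (fun i => i ∉ A ∧ x < S i)).card : ℝ) ≤ x →
      (∀ y : ℝ, 0 ≤ y → y < x →
        ¬ (0 < (Finset.univ.filter (fun i => i ∉ A ∧ y < S i)).card ∧
          ((∑ i ∈ A, L i) + ∑ i ∈ Finset.univ.filter (fun i => i ∉ A ∧ S i ≤ y), L i) /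
            ((Finset.univ.filter (fun i => i ∉ A ∧ y < S i)).card : ℝ) ≤ y)) →
      Finset.univ \ cascade L S A = Finset.univ.filter (fun i => i ∉ A ∧ x < S i)) ∧
    ((¬ ∃ x : ℝ, 0 ≤ x ∧
        0 < (Finset.univ.filter (fun i => i ∉ A ∧ x < S i)).card ∧
        ((∑ i ∈ A, L i) + ∑ i ∈ Finset.univ.filter (fun i => i ∉ A ∧ S i ≤ x), L i) /
          ((Finset.univ.filter (fun i => i ∉ A ∧ x < S i)).card : ℝ) ≤ x) →
      cascade L S A = Finset.univ) := by
  constructor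
  · intro x hx0 hpos hle hmin
    set Fx := Finset.univ.filter (fun i => i ∈ A ∨ S i ≤ x) with hFx
    have hthr : thr L Fx ≤ x := by
      rw [hFx, thr_Fx L S]; exact hle
    have hfix : step L S Fx = Fx := Fx_fixed L S A x hthr
    have hAF : A ⊆ Fx := fun i hi => Finset.mem_filter.2 ⟨Finset.mem_univ i, Or.inl hi⟩
    have hCF : cascade L S A ⊆ Fx := iterate_subset_of_fixed L S hL hfix hAF N
    have hne : cascade L S A ≠ Finset.univ := by
      intro hu
      obtain ⟨i, hi⟩ := Finset.card_pos.1 hpos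
      have hiF : i ∈ Fx := hCF (hu ▸ Finset.mem_univ i)
      rw [Finset.mem_filter] at hi hiF
      rcases hiF.2 with h | h
      · exact hi.2.1 h
      · exact absurd hi.2.2 (not_lt.2 h)
    obtain ⟨y, hy0, hypos, hyle, hCeq⟩ := cascade_char L S hL A hne
    have hxy : x ≤ y := by
      by_contra hxy
      push_neg at hxy
      exact hmin y hy0 hxy ⟨hypos, hyle⟩
    have hFC : Fx ⊆ cascade L S A := by
      rw [hCeq, hFx]
      intro i hi
      rw [Finset.mem_filter] at hi ⊢
      refine ⟨hi.1, ?_⟩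
      rcases hi.2 with h | h
      · exact Or.inl h
      · exact Or.inr (h.trans hxy)
    have hCeq' : cascade L S A = Fx := hCF.antisymm hFC
    rw [hCeq', hFx]
    exact compl_Fx S A x
  · intro hnex
    by_contra hne
    obtain ⟨y, hy0, hypos, hyle, _⟩ := cascade_char L S hL A hne
    exact hnex ⟨y, hy0, hypos, hyle⟩
end

section
/- In the max-capacity counterexample with 2n+1 containers, where n containers have (load, capacity) = (ε, M) and n+1 containers have (load, capacity) = (M - 2ε, M - ε), with ε > 0 small and M > 2(n+1)ε: (a) attacking any single container of the second type triggers a cascade that fails all 2n+1 containers, while (b) attacking all n containers of the first type (the max-capacity containers) triggers no further failures, i.e., the alive count after attacking those n containers is n+1. -/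
open Finset
open scoped Classical

/-- The max-capacity counterexample: among `2n+1` containers, `n` of type `(ε, M)`
(free space `M-ε`) and `n+1` of type `(M-2ε, M-ε)` (free space `ε`), with
`M > 2(n+1)ε`: attacking any single container of the second type fails everything,
while attacking all `n` first-type (max-capacity) containers triggers no further
failures. -/
theorem max_capacity_counterexample (n : ℕ) (hn : 1 ≤ n) (ε M : ℝ)
    (hε : 0 < ε) (hM : 2 * ((n : ℝ) + 1) * ε < M) :
    (∀ a : Fin (2 * n + 1), n ≤ (a : ℕ) →
      cascade (fun i : Fin (2 * n + 1) => if (i : ℕ) < n then ε else M - 2 * ε)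
        (fun i : Fin (2 * n + 1) => if (i : ℕ) < n then M - ε else ε) {a} = Finset.univ) ∧
    (cascade (fun i : Fin (2 * n + 1) => if (i : ℕ) < n then ε else M - 2 * ε)
        (fun i : Fin (2 * n + 1) => if (i : ℕ) < n then M - ε else ε)
        (Finset.univ.filter (fun i : Fin (2 * n + 1) => (i : ℕ) < n))
      = Finset.univ.filter (fun i : Fin (2 * n + 1) => (i : ℕ) < n)) := by
  have hn' : (1:ℝ) ≤ (n:ℝ) := by exact_mod_cast hn
  have hM0 : (0:ℝ) < M := by nlinarith
  set L : Fin (2*n+1) → ℝ := fun i => if (i:ℕ) < n then ε else M - 2*ε with hL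
  set S : Fin (2*n+1) → ℝ := fun i => if (i:ℕ) < n then M - ε else ε with hS
  set A : Finset (Fin (2*n+1)) := Finset.univ.filter (fun i : Fin (2*n+1) => (i:ℕ) < n) with hA
  -- card of A
  have hAIio : A = Finset.Iio (⟨n, by omega⟩ : Fin (2*n+1)) := by
    ext i; simp [hA, Fin.lt_def]
  have hAcard : A.card = n := by rw [hAIio, Fin.card_Iio]
  -- the complement set B
  set B : Finset (Fin (2*n+1)) := Finset.univ.filter (fun i : Fin (2*n+1) => ¬ (i:ℕ) < n) with hB
  have hBcard : B.card = n + 1 := by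
    have := Finset.card_filter_add_card_filter_not
      (s := (Finset.univ : Finset (Fin (2*n+1)))) (p := fun i => (i:ℕ) < n)
    rw [← hA, ← hB, Finset.card_univ, Fintype.card_fin] at this
    omega
  -- univ is a fixed point of step
  have hstep_univ : step L S (Finset.univ : Finset (Fin (2*n+1))) = Finset.univ := by
    simp [step]
  constructor
  · -- part (a)
    intro a ha
    -- step 1 : {a} → B
    have hsum1 : (∑ j ∈ ({a} : Finset (Fin (2*n+1))), L j) = M - 2*ε := by
      simp [hL, Nat.not_lt.mpr ha]
    have hden1 : ((2*n+1 : ℕ) : ℝ) - (({a} : Finset (Fin (2*n+1))).card : ℝ) = 2*n := by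
      rw [Finset.card_singleton]; push_cast; ring
    have hε2n : ε ≤ (M - 2*ε) / (2*(n:ℝ)) := by
      rw [le_div_iff₀ (by nlinarith)]; nlinarith
    have hMε2n : ¬ (M - ε ≤ (M - 2*ε) / (2*(n:ℝ))) := by
      rw [not_le, div_lt_iff₀ (by nlinarith)]; nlinarith
    have hstep1 : step L S {a} = B := by
      rw [step, hsum1]
      have : ((2*n+1 : ℕ) : ℝ) - (({a} : Finset (Fin (2*n+1))).card : ℝ) = 2*n := hden1
      rw [this]
      ext i
      simp only [Finset.mem_union, Finset.mem_singleton, Finset.mem_filter,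
        Finset.mem_univ, true_and, hB, hS]
      constructor
      · rintro (rfl | h)
        · exact Nat.not_lt.mpr ha
        · rcases Nat.lt_or_ge (i : ℕ) n with hi | hi
          · rw [if_pos hi] at h; exact absurd h hMε2n
          · exact Nat.not_lt.mpr hi
      · intro hi
        right
        rw [if_neg hi]
        exact hε2n
    -- step 2 : B → univ
    have hsum2 : (∑ j ∈ B, L j) = ((n:ℝ) + 1) * (M - 2*ε) := by
      have hc : ∀ j ∈ B, L j = M - 2*ε := by
        intro j hj
        rw [hB] at hj; simp only [Finset.mem_filter] at hj
        simp [hL, hj.2]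
      rw [Finset.sum_congr rfl hc, Finset.sum_const, hBcard, nsmul_eq_mul]
      push_cast; ring
    have hden2 : ((2*n+1 : ℕ) : ℝ) - (B.card : ℝ) = n := by
      rw [hBcard]; push_cast; ring
    have hstep2 : step L S B = Finset.univ := by
      rw [step, hsum2, hden2]
      apply Finset.eq_univ_of_forall
      intro i
      rcases Nat.lt_or_ge (i : ℕ) n with hi | hi
      · refine Finset.mem_union_right _ ?_
        simp only [Finset.mem_filter, Finset.mem_univ, true_and, hS, if_pos hi]
        rw [le_div_iff₀ (by linarith)]; nlinarith
      · exact Finset.mem_union_left _ (by simpa [hB] using hi)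
    -- assemble
    have key : ∀ k, (step L S)^[k + 2] {a} = Finset.univ := by
      intro k
      induction k with
      | zero =>
          rw [Function.iterate_succ_apply, Function.iterate_succ_apply, hstep1,
            Function.iterate_zero_apply, hstep2]
      | succ k ih =>
          have : k + 1 + 2 = (k + 2) + 1 := by omega
          rw [this, Function.iterate_succ_apply', ih, hstep_univ]
    have h2 := key (2*n - 1)
    rw [show (2*n - 1) + 2 = 2*n + 1 from by omega] at h2
    rw [cascade]; exact h2
  · -- part (b)
    have hsumA : (∑ j ∈ A, L j) = (n:ℝ) * ε := by
      have hc : ∀ j ∈ A, L j = ε := by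
        intro j hj
        rw [hA] at hj; simp only [Finset.mem_filter] at hj
        simp [hL, hj.2]
      rw [Finset.sum_congr rfl hc, Finset.sum_const, hAcard, nsmul_eq_mul]
    have hdenA : ((2*n+1 : ℕ) : ℝ) - (A.card : ℝ) = (n:ℝ) + 1 := by
      rw [hAcard]; push_cast; ring
    have hfix : step L S A = A := by
      rw [step, hsumA, hdenA]
      have hfilt : Finset.univ.filter
          (fun i : Fin (2*n+1) => S i ≤ (n:ℝ) * ε / ((n:ℝ) + 1)) = ∅ := by
        apply Finset.filter_false_of_mem
        intro i _
        rw [not_le, div_lt_iff₀ (by linarith)]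
        rcases Nat.lt_or_ge (i : ℕ) n with hi | hi
        · rw [hS]; simp only [if_pos hi]; nlinarith
        · rw [hS]; simp only [if_neg (Nat.not_lt.mpr hi)]; nlinarith
      rw [hfilt, Finset.union_empty]
    rw [cascade, Function.iterate_fixed hfix]
end
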